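/- Every Minimum-k-Union instance is realized by a MINT instance: let X_1, …, X_m be finite subsets of a finite universe U, and construct the directed bipartite graph with vertex set V = {p_1, …, p_m} ⊔ U, positive nodes P = {p_1, …, p_m}, negative nodes N = U, and edge set H = {(p_i, u) : u ∈ X_i}. Then for every index set I ⊆ {1, …, m}, f_H({p_i : i ∈ I}) = |⋃_{i ∉ I} X_i|; in particular, for every k with 0 ≤ k ≤ m, the minimum of f_H(S) over S ⊆ P with |S| ≤ k equals the minimum of |⋃_{i ∈ J} X_i| over J ⊆ {1, …, m} with |J| = m − k. -/

import Mathlib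

open Finset

/-- A single transmission step along a live edge of `H`, avoiding the removed vertex set `S`. -/
def MintStep {α : Type*} (H : Finset (α × α)) (S : Finset α) (x y : α) : Prop :=
  (x, y) ∈ H ∧ x ∉ S ∧ y ∉ S

/-- `u` is reachable from `v` in `H[V \ S]`: there is a directed path (possibly of length 0)
from `v` to `u` using only edges of `H`, all of whose vertices avoid `S`. -/
def MintReach {α : Type*} (H : Finset (α × α)) (S : Finset α) (v u : α) : Prop :=
  v ∉ S ∧ Relation.ReflTransGen (MintStep H S) v u


/-- The realized MINT objective `f_H(S)`: the number of negative nodes (nodes outside `P`)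
reachable from some untreated positive node (a node of `P \ S`) in `H[V \ S]`. -/
noncomputable def mintf {α : Type*} [DecidableEq α] (P : Finset α) (H : Finset (α × α))
    (S : Finset α) : ℕ :=
  Set.ncard {u : α | u ∉ P ∧ ∃ v ∈ P \ S, MintReach H S v u}

section Aux

variable {U : Type*} [Fintype U] [DecidableEq U] {m : ℕ} (X : Fin m → Finset U)

omit [Fintype U] in
private lemma mint_key (I : Finset (Fin m)) :
    mintf (Finset.univ.image Sum.inl)
      (Finset.univ.biUnion fun i : Fin m => (X i).image fun u => (Sum.inl i, Sum.inr u))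
      (I.image Sum.inl) = (Iᶜ.biUnion X).card := by
  set P : Finset (Fin m ⊕ U) := Finset.univ.image Sum.inl with hP
  set H : Finset ((Fin m ⊕ U) × (Fin m ⊕ U)) :=
    Finset.univ.biUnion fun i : Fin m => (X i).image fun u => (Sum.inl i, Sum.inr u) with hH
  set S : Finset (Fin m ⊕ U) := I.image Sum.inl with hS
  have hedge : ∀ x y : Fin m ⊕ U, (x, y) ∈ H ↔ ∃ i, ∃ u ∈ X i, x = Sum.inl i ∧ y = Sum.inr u := by
    intro x y
    simp [hH, Prod.ext_iff, and_comm, eq_comm]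
  have hinrS : ∀ a : U, Sum.inr a ∉ S := by
    intro a ha
    simp [hS] at ha
  have hnostep : ∀ (a : U) (y : Fin m ⊕ U), ¬ MintStep H S (Sum.inr a) y := by
    rintro a y ⟨hmem, -, -⟩
    rw [hedge] at hmem
    obtain ⟨i, u, -, h1, -⟩ := hmem
    cases h1
  have hset : {u : Fin m ⊕ U | u ∉ P ∧ ∃ v ∈ P \ S, MintReach H S v u}
      = Sum.inr '' ↑(Iᶜ.biUnion X) := by
    ext w
    constructor
    · rintro ⟨hwP, v, hv, hvS, hreach⟩
      rw [Finset.mem_sdiff] at hv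
      obtain ⟨hvP, hvS'⟩ := hv
      simp only [hP, Finset.mem_image, Finset.mem_univ, true_and] at hvP
      obtain ⟨i, rfl⟩ := hvP
      have hiI : i ∉ I := by
        intro hi
        exact hvS' (Finset.mem_image_of_mem _ hi)
      rcases Relation.ReflTransGen.cases_head hreach with h | ⟨b, hstep, hrest⟩
      · exact absurd (h ▸ Finset.mem_image_of_mem Sum.inl (Finset.mem_univ i)) hwP
      · obtain ⟨hmem, -, -⟩ := hstep
        rw [hedge] at hmem
        obtain ⟨j, u, huX, h1, rfl⟩ := hmem
        obtain rfl : j = i := Sum.inl.inj h1.symm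
        rcases Relation.ReflTransGen.cases_head hrest with h | ⟨c, hstep', -⟩
        · refine ⟨u, ?_, h⟩
          simp only [Finset.coe_biUnion, Set.mem_iUnion, Finset.mem_coe, Finset.mem_compl]
          exact ⟨_, hiI, huX⟩
        · exact absurd hstep' (hnostep u c)
    · rintro ⟨a, ha, rfl⟩
      simp only [Finset.coe_biUnion, Set.mem_iUnion, Finset.mem_coe, Finset.mem_compl] at ha
      obtain ⟨i, hiI, haX⟩ := ha
      have hinlS : Sum.inl i ∉ S := by
        simp only [hS, Finset.mem_image]
        rintro ⟨j, hj, hji⟩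
        exact hiI (Sum.inl.inj hji ▸ hj)
      refine ⟨?_, Sum.inl i, ?_, hinlS, Relation.ReflTransGen.single ⟨?_, hinlS, hinrS a⟩⟩
      · simp [hP]
      · exact Finset.mem_sdiff.mpr ⟨Finset.mem_image_of_mem _ (Finset.mem_univ i), hinlS⟩
      · rw [hedge]; exact ⟨i, a, haX, rfl, rfl⟩
  rw [mintf, hset, Set.ncard_image_of_injective _ Sum.inr_injective, Set.ncard_coe_finset]

end Aux


/-- Every Minimum-k-Union instance `X_1, …, X_m ⊆ U` is realized by the MINT instance on the
directed bipartite graph with vertices `Fin m ⊕ U`, positive nodes `P = {p_i}`, negative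
nodes `U`, and edges `(p_i, u)` for `u ∈ X_i`: for every `I ⊆ {1, …, m}`,
`f_H({p_i : i ∈ I}) = |⋃_{i ∉ I} X_i|`, and for every `0 ≤ k ≤ m` the minimum of `f_H(S)`
over `S ⊆ P`, `|S| ≤ k` equals the minimum of `|⋃_{i ∈ J} X_i|` over `|J| = m - k`. -/
theorem stmt6 {U : Type*} [Fintype U] [DecidableEq U] (m : ℕ) (X : Fin m → Finset U)
    (k : ℕ) (hk : k ≤ m) :
    letI P : Finset (Fin m ⊕ U) := Finset.univ.image Sum.inl
    letI H : Finset ((Fin m ⊕ U) × (Fin m ⊕ U)) :=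
      Finset.univ.biUnion fun i : Fin m => (X i).image fun u => (Sum.inl i, Sum.inr u)
    (∀ I : Finset (Fin m), mintf P H (I.image Sum.inl) = (Iᶜ.biUnion X).card) ∧
    sInf {n : ℕ | ∃ S ⊆ P, S.card ≤ k ∧ mintf P H S = n} =
      sInf {n : ℕ | ∃ J : Finset (Fin m), J.card = m - k ∧ (J.biUnion X).card = n} := by
  refine ⟨mint_key X, ?_⟩
  set P : Finset (Fin m ⊕ U) := Finset.univ.image Sum.inl with hP
  set H : Finset ((Fin m ⊕ U) × (Fin m ⊕ U)) :=
    Finset.univ.biUnion fun i : Fin m => (X i).image fun u => (Sum.inl i, Sum.inr u) with hH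
  set A := {n : ℕ | ∃ S ⊆ P, S.card ≤ k ∧ mintf P H S = n} with hA
  set B := {n : ℕ | ∃ J : Finset (Fin m), J.card = m - k ∧ (J.biUnion X).card = n} with hB
  -- B → A : given J of card m-k, take I = Jᶜ, S = I.image inl
  have hBA : ∀ n ∈ B, ∃ n' ∈ A, n' ≤ n := by
    rintro n ⟨J, hJcard, rfl⟩
    refine ⟨mintf P H (Jᶜ.image Sum.inl), ⟨Jᶜ.image Sum.inl,
      Finset.image_subset_image (Finset.subset_univ _), ?_, rfl⟩, ?_⟩
    · rw [Finset.card_image_of_injective _ Sum.inl_injective, Finset.card_compl, hJcard,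
        Fintype.card_fin]
      omega
    · rw [mint_key X, compl_compl]
  have hAB : ∀ n ∈ A, ∃ n' ∈ B, n' ≤ n := by
    rintro n ⟨S, hSP, hScard, rfl⟩
    set I : Finset (Fin m) := Finset.univ.filter (fun i => Sum.inl i ∈ S) with hI
    have hSI : S = I.image Sum.inl := by
      ext x
      constructor
      · intro hx
        have := hSP hx
        simp only [hP, Finset.mem_image, Finset.mem_univ, true_and] at this
        obtain ⟨i, rfl⟩ := this
        exact Finset.mem_image_of_mem _ (by simp [hI, hx])
      · intro hx
        simp only [Finset.mem_image, hI, Finset.mem_filter, Finset.mem_univ, true_and] at hx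
        obtain ⟨i, hi, rfl⟩ := hx
        exact hi
    have hIcard : I.card ≤ k := by
      rw [hSI, Finset.card_image_of_injective _ Sum.inl_injective] at hScard
      exact hScard
    have hcompl : m - k ≤ Iᶜ.card := by
      rw [Finset.card_compl, Fintype.card_fin]
      omega
    obtain ⟨J, hJsub, hJcard⟩ := Finset.exists_subset_card_eq hcompl
    refine ⟨(J.biUnion X).card, ⟨J, hJcard, rfl⟩, ?_⟩
    rw [hSI, mint_key X]
    exact Finset.card_le_card (Finset.biUnion_subset_biUnion_of_subset_left X hJsub)
  have hBne : B.Nonempty := by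
    obtain ⟨J, -, hJcard⟩ := Finset.exists_subset_card_eq
      (show m - k ≤ (Finset.univ : Finset (Fin m)).card by simp)
    exact ⟨(J.biUnion X).card, J, hJcard, rfl⟩
  have hAne : A.Nonempty := by
    obtain ⟨n, hn, -⟩ := hBA _ (Nat.sInf_mem hBne)
    exact ⟨n, hn⟩
  apply le_antisymm
  · obtain ⟨n', hn', hle⟩ := hBA _ (Nat.sInf_mem hBne)
    exact le_trans (Nat.sInf_le hn') hle
  · obtain ⟨n', hn', hle⟩ := hAB _ (Nat.sInf_mem hAne)
    exact le_trans (Nat.sInf_le hn') hle
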